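/- A pair (a,b) in a distributive lattice L with least element 0 is consonant (there exist u,v with a ∨ b = a ∨ v = u ∨ b and u ∧ v = 0) if and only if there exist u,v ∈ L with a = (a ∧ b) ∨ u, b = (a ∧ b) ∨ v, and u ∧ v = 0. -/
import Mathlib

theorem consonant_iff {L : Type*} [DistribLattice L] [OrderBot L] (a b : L) :
    (∃ u v : L, a ⊔ b = a ⊔ v ∧ a ⊔ b = u ⊔ b ∧ u ⊓ v = ⊥) ↔
      (∃ u v : L, a = (a ⊓ b) ⊔ u ∧ b = (a ⊓ b) ⊔ v ∧ u ⊓ v = ⊥) := by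
  constructor
  · rintro ⟨u, v, h1, h2, h3⟩
    refine ⟨u ⊓ a, v ⊓ b, ?_, ?_, ?_⟩
    · calc a = a ⊓ (a ⊔ b) := by simp
        _ = a ⊓ (u ⊔ b) := by rw [h2]
        _ = (a ⊓ u) ⊔ (a ⊓ b) := inf_sup_left a u b
        _ = (a ⊓ b) ⊔ (u ⊓ a) := by rw [sup_comm, inf_comm a u]
    · calc b = b ⊓ (a ⊔ b) := by simp
        _ = b ⊓ (a ⊔ v) := by rw [h1]
        _ = (b ⊓ a) ⊔ (b ⊓ v) := inf_sup_left b a v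
        _ = (a ⊓ b) ⊔ (v ⊓ b) := by rw [inf_comm b a, inf_comm b v]
    · exact le_bot_iff.mp (le_trans (inf_le_inf inf_le_left inf_le_left) h3.le)
  · rintro ⟨u, v, h1, h2, h3⟩
    refine ⟨u, v, ?_, ?_, h3⟩
    · conv_lhs => rw [h2]
      rw [← sup_assoc, sup_inf_self]
    · conv_lhs => rw [h1]
      rw [sup_comm (a ⊓ b) u, sup_assoc,
        sup_eq_right.mpr (inf_le_right : a ⊓ b ≤ b)]
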